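/- If p is a prime with p ≡ 1 (mod 6), then p cannot be represented by both x² + 27y² and 4x² + 2xy + 7y²: moreover p is represented by x² + 27y² if and only if 2^((p-1)/3) ≡ 1 (mod p), and in that case the number of representations by x²+27y² is 4 while the number by 4x²+2xy+7y² is 0; otherwise the number of representations by x²+27y² is 0 and by 4x²+2xy+7y² is 2. -/

import Mathlib

/-- Square mod 2 has same parity. -/
private lemma sq_mod_two (x : ℤ) : x ^ 2 % 2 = x % 2 := by
  rw [sq, Int.mul_emod]
  rcases Int.emod_two_eq x with h | h <;> rw [h] <;> norm_num

private lemma sq_eq_sq_cases {a b : ℤ} (h : a ^ 2 = b ^ 2) : a = b ∨ a = -b := by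
  have h0 : (a - b) * (a + b) = 0 := by linear_combination h
  rcases mul_eq_zero.mp h0 with h' | h'
  · left; linarith
  · right; linarith

private lemma quarter_sq {a b : ℤ} (h : (2 * a) ^ 2 = (2 * b) ^ 2) : a ^ 2 = b ^ 2 := by
  have h1 : (2 * a) ^ 2 = 4 * a ^ 2 := by ring
  have h2 : (2 * b) ^ 2 = 4 * b ^ 2 := by ring
  linarith

/-- Uniqueness of the representation `4p = L² + 27M²` up to signs. -/
private lemma uniqLM (p : ℕ) (hp : p.Prime) (L M L' M' : ℤ)
    (h1 : 4 * (p : ℤ) = L ^ 2 + 27 * M ^ 2) (h2 : 4 * (p : ℤ) = L' ^ 2 + 27 * M' ^ 2) :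
    L' ^ 2 = L ^ 2 ∧ M' ^ 2 = M ^ 2 := by
  have hpI : Prime (p : ℤ) := Nat.prime_iff_prime_int.mp hp
  have hp0 : (0 : ℤ) < (p : ℤ) := by exact_mod_cast hp.pos
  have key : (L * M' - L' * M) * (L * M' + L' * M) = (p : ℤ) * (4 * (M' ^ 2 - M ^ 2)) := by
    linear_combination (-(M' ^ 2)) * h1 + M ^ 2 * h2
  have hdvd : (p : ℤ) ∣ (L * M' - L' * M) * (L * M' + L' * M) := ⟨_, key⟩
  have hMM : M' ^ 2 = M ^ 2 := by
    rcases hpI.dvd_mul.mp hdvd with h | h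
    · obtain ⟨k, hk⟩ := h
      have ident : (L * L' + 27 * M * M') ^ 2 + 27 * ((p : ℤ) * k) ^ 2 = 16 * (p : ℤ) ^ 2 := by
        rw [← hk]; linear_combination (-(L' ^ 2 + 27 * M' ^ 2)) * h1 + (-(4 * (p:ℤ))) * h2
      have hk0 : k = 0 := by
        by_contra hkne
        have h1k : 1 ≤ k ^ 2 := by
          rcases lt_trichotomy k 0 with h | h | h
          · nlinarith
          · exact absurd h hkne
          · nlinarith
        have hp1 : 1 ≤ (p : ℤ) := hp0
        nlinarith [sq_nonneg (L * L' + 27 * M * M'),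
          mul_le_mul_of_nonneg_left h1k (sq_nonneg ((p:ℤ)))]
      have h0 : L * M' = L' * M := by rw [hk0, mul_zero] at hk; linarith
      have : 4 * (p : ℤ) * M' ^ 2 = 4 * (p : ℤ) * M ^ 2 := by
        have e1 : L ^ 2 * M' ^ 2 = L' ^ 2 * M ^ 2 := by
          have := congrArg (· ^ 2) h0
          simpa [mul_pow] using this
        linear_combination M' ^ 2 * h1 - M ^ 2 * h2 + e1
      have h4p : (4 : ℤ) * (p : ℤ) ≠ 0 := by positivity
      exact mul_left_cancel₀ h4p this
    · obtain ⟨k, hk⟩ := h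
      have ident : (L * L' - 27 * M * M') ^ 2 + 27 * ((p : ℤ) * k) ^ 2 = 16 * (p : ℤ) ^ 2 := by
        rw [← hk]; linear_combination (-(L' ^ 2 + 27 * M' ^ 2)) * h1 + (-(4 * (p:ℤ))) * h2
      have hk0 : k = 0 := by
        by_contra hkne
        have h1k : 1 ≤ k ^ 2 := by
          rcases lt_trichotomy k 0 with h | h | h
          · nlinarith
          · exact absurd h hkne
          · nlinarith
        have hp1 : 1 ≤ (p : ℤ) := hp0
        nlinarith [sq_nonneg (L * L' - 27 * M * M'),
          mul_le_mul_of_nonneg_left h1k (sq_nonneg ((p:ℤ)))]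
      have h0 : L * M' = -(L' * M) := by rw [hk0, mul_zero] at hk; linarith
      have : 4 * (p : ℤ) * M' ^ 2 = 4 * (p : ℤ) * M ^ 2 := by
        have e1 : L ^ 2 * M' ^ 2 = L' ^ 2 * M ^ 2 := by
          have := congrArg (· ^ 2) h0
          simpa [mul_pow] using this
        linear_combination M' ^ 2 * h1 - M ^ 2 * h2 + e1
      have h4p : (4 : ℤ) * (p : ℤ) ≠ 0 := by positivity
      exact mul_left_cancel₀ h4p this
  refine ⟨by linarith [h1, h2, hMM], hMM⟩

open Complex in
/-- Complex conjugation on cube roots of unity is squaring. -/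
private lemma conj_cube {z : ℂ} (hz3 : z ^ 3 = 1) : (starRingEnd ℂ) z = z ^ 2 := by
  have habs : ‖z‖ = 1 := by
    have h1 : ‖z‖ ^ 3 = 1 := by rw [← norm_pow, hz3, norm_one]
    rcases lt_trichotomy (‖z‖) 1 with h | h | h
    · have := pow_lt_one₀ (norm_nonneg z) h (by norm_num : (3:ℕ) ≠ 0)
      exact absurd h1 (by linarith)
    · exact h
    · have := one_lt_pow₀ h (by norm_num : (3:ℕ) ≠ 0)
      exact absurd h1 (by linarith)
  have h2 : z * (starRingEnd ℂ) z = 1 := by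
    rw [Complex.mul_conj, Complex.normSq_eq_norm_sq, habs]; norm_num
  have h3 : z * z ^ 2 = 1 := by rw [← hz3]; ring
  rw [eq_inv_of_mul_eq_one_right h2] at *
  exact (eq_inv_of_mul_eq_one_right h3).symm

/-- The key lemma, via Jacobi sums. -/
private lemma keyLM (p : ℕ) (hp : p.Prime) (h6 : p % 6 = 1) :
    ∃ L M : ℤ, 4 * (p : ℤ) = L ^ 2 + 27 * M ^ 2 ∧
      (L % 2 = 0 ↔ (2 : ZMod p) ^ ((p - 1) / 3) = 1) := by
  classical
  haveI : Fact p.Prime := ⟨hp⟩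
  have hp7 : 7 ≤ p := by have := hp.two_le; omega
  have h3 : 3 ∣ p - 1 := by omega
  -- the primitive cube root of unity in ℂ
  set ζ : ℂ := Complex.exp (2 * Real.pi * Complex.I / 3) with hζdef
  have hζ : IsPrimitiveRoot ζ 3 := Complex.isPrimitiveRoot_exp 3 (by norm_num)
  have hζ3 : ζ ^ 3 = 1 := hζ.pow_eq_one
  have hζ1 : ζ ≠ 1 := hζ.ne_one (by norm_num)
  have hζ21 : ζ ^ 2 ≠ 1 := hζ.pow_ne_one_of_pos_of_lt (by norm_num) (by norm_num)
  have hζq : ζ ^ 2 + ζ + 1 = 0 := by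
    have h0 : (ζ - 1) * (ζ ^ 2 + ζ + 1) = 0 := by linear_combination hζ3
    rcases mul_eq_zero.mp h0 with h | h
    · exact absurd (sub_eq_zero.mp h) hζ1
    · exact h
  have hζim : ζ.im ≠ 0 := by
    intro h0
    have hre := congrArg Complex.re hζq
    have h2 : (ζ ^ 2).re = ζ.re * ζ.re - ζ.im * ζ.im := by rw [sq]; exact Complex.mul_re ζ ζ
    simp only [Complex.add_re, Complex.one_re, Complex.zero_re, h2, h0] at hre
    nlinarith [hre]
  -- linear independence of 1, ζ over ℤ
  have hind : ∀ a b : ℤ, (a : ℂ) + (b : ℂ) * ζ = 0 → a = 0 ∧ b = 0 := by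
    intro a b h
    have him := congrArg Complex.im h
    simp only [Complex.add_im, Complex.intCast_im, Complex.mul_im, Complex.intCast_re,
      Complex.zero_im, zero_add, zero_mul, add_zero, mul_zero] at him
    have hb : (b : ℝ) = 0 := by
      rcases mul_eq_zero.mp him with h' | h'
      · exact h'
      · exact absurd h' hζim
    have hb' : b = 0 := by exact_mod_cast hb
    subst hb'
    have : (a : ℂ) = 0 := by simpa using h
    exact ⟨by exact_mod_cast this, rfl⟩
  have hcoord : ∀ a b c d : ℤ, (a : ℂ) + (b : ℂ) * ζ = (c : ℂ) + (d : ℂ) * ζ →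
      a = c ∧ b = d := by
    intro a b c d h
    have h' : ((a - c : ℤ) : ℂ) + ((b - d : ℤ) : ℂ) * ζ = 0 := by push_cast; linear_combination h
    obtain ⟨h1, h2⟩ := hind _ _ h'
    omega
  -- elements of ℤ[ζ] have coordinates
  have hA : ∀ w ∈ Algebra.adjoin ℤ {ζ}, ∃ u v : ℤ, w = (u : ℂ) + (v : ℂ) * ζ := by
    intro w hw
    induction hw using Algebra.adjoin_induction with
    | mem x hx =>
      rw [Set.mem_singleton_iff] at hx
      exact ⟨0, 1, by rw [hx]; push_cast; ring⟩
    | algebraMap r => exact ⟨r, 0, by push_cast; simp [Algebra.algebraMap_eq_smul_one]⟩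
    | add x y hx hy ihx ihy =>
      obtain ⟨u1, v1, rfl⟩ := ihx
      obtain ⟨u2, v2, rfl⟩ := ihy
      exact ⟨u1 + u2, v1 + v2, by push_cast; ring⟩
    | mul x y hx hy ihx ihy =>
      obtain ⟨u1, v1, rfl⟩ := ihx
      obtain ⟨u2, v2, rfl⟩ := ihy
      refine ⟨u1 * u2 - v1 * v2, u1 * v2 + v1 * u2 - v1 * v2, ?_⟩
      push_cast
      linear_combination ((v1 : ℂ) * (v2 : ℂ)) * hζq
  -- the cubic character
  have hcard : Fintype.card (ZMod p) = p := ZMod.card p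
  obtain ⟨χ, hχord⟩ := MulChar.exists_mulChar_orderOf (ZMod p)
    (by rw [hcard]; exact h3) hζ
  have hχ3 : χ ^ 3 = 1 := by rw [← hχord]; exact pow_orderOf_eq_one χ
  have hχ1 : χ ≠ 1 := by
    intro h; rw [h, orderOf_one] at hχord; norm_num at hχord
  have hχχ : χ * χ ≠ 1 := by
    intro h
    have h2 : χ ^ 2 = 1 := by rwa [sq]
    have := orderOf_dvd_of_pow_eq_one h2
    rw [hχord] at this
    norm_num at this
  -- cube property of values
  have hval3 : ∀ x : ZMod p, x ≠ 0 → (χ x) ^ 3 = 1 := by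
    intro x hx
    rw [← MulChar.pow_apply' χ (by norm_num : (3:ℕ) ≠ 0), hχ3,
      MulChar.one_apply (isUnit_iff_ne_zero.mpr hx)]
  set J := jacobiSum χ χ with hJdef
  -- J * conj J = p
  have hringchar : ringChar ℂ ≠ ringChar (ZMod p) := by
    rw [ringChar.eq_zero, ZMod.ringChar_zmod_n]
    exact fun h => by omega
  have hstar2 : χ.ringHomComp (starRingEnd ℂ) = χ ^ 2 := by
    apply MulChar.ext'
    intro a
    rcases eq_or_ne a 0 with rfl | ha
    · rw [MulChar.ringHomComp_apply, χ.map_zero, map_zero,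
        MulChar.pow_apply' χ (by norm_num : (2:ℕ) ≠ 0), χ.map_zero]
      norm_num
    · rw [MulChar.ringHomComp_apply, MulChar.pow_apply' χ (by norm_num : (2:ℕ) ≠ 0)]
      exact conj_cube (hval3 a ha)
  have hstarinv : χ⁻¹ = χ.ringHomComp (starRingEnd ℂ) := by
    rw [hstar2]
    have : χ ^ 2 * χ = 1 := by rw [← pow_succ, hχ3]
    exact (eq_inv_of_mul_eq_one_left this).symm
  have hnorm : J * (starRingEnd ℂ) J = (p : ℂ) := by
    have h1 := jacobiSum_mul_jacobiSum_inv hringchar hχ1 hχ1 hχχ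
    rw [hcard] at h1
    rw [hJdef, ← jacobiSum_ringHomComp, ← hstarinv]
    exact_mod_cast h1
  -- J ≡ -1 mod (ζ-1)²
  obtain ⟨z, hzA, hz⟩ := exists_jacobiSum_eq_neg_one_add (by norm_num : (2:ℕ) < 3)
    hχ3 hχ3 (by rw [hcard]; exact h3) hζ
  obtain ⟨z₁, z₂, hz12⟩ := hA z hzA
  rw [hz12] at hz
  -- coordinates of J
  have hJab : J = ((3 * z₂ - 1 : ℤ) : ℂ) + ((3 * (z₂ - z₁) : ℤ) : ℂ) * ζ := by
    rw [hJdef, hz]; push_cast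
    linear_combination ((z₂ : ℂ) * ζ + (z₁ : ℂ) - 3 * (z₂ : ℂ)) * hζq
  set a : ℤ := 3 * z₂ - 1 with hadef
  set b : ℤ := 3 * (z₂ - z₁) with hbdef
  -- the norm identity
  have hconjζ : (starRingEnd ℂ) ζ = ζ ^ 2 := conj_cube hζ3
  have hnormZ : a ^ 2 - a * b + b ^ 2 = (p : ℤ) := by
    have h1 : J * (starRingEnd ℂ) J = ((a ^ 2 - a * b + b ^ 2 : ℤ) : ℂ) := by
      rw [hJab, map_add, map_mul, hconjζ]
      rw [map_intCast, map_intCast]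
      push_cast
      linear_combination ((a : ℂ) * (b : ℂ) + (b : ℂ) ^ 2 * (ζ - 1)) * hζq
    rw [h1] at hnorm
    exact_mod_cast hnorm
  -- the mod-2 congruence : J = χ 2 + 2 * w
  have h2ne : (2 : ZMod p) ≠ 0 := by
    have : ((2 : ℕ) : ZMod p) ≠ 0 := by
      rw [Ne, ZMod.natCast_eq_zero_iff]
      intro h
      have := Nat.le_of_dvd (by norm_num) h
      omega
    exact_mod_cast this
  set c : ZMod p := (2 : ZMod p)⁻¹ with hcdef
  have hc2 : (2 : ZMod p) * c = 1 := mul_inv_cancel₀ h2ne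
  have h1c : 1 - c = c := by
    have h2 : c + c = 1 := by rw [← two_mul]; exact hc2
    rw [← h2]; ring
  have hcfix : ∀ x : ZMod p, 1 - x = x → x = c := by
    intro x h
    have h2x : (2 : ZMod p) * x = (2 : ZMod p) * c := by
      linear_combination -h - hc2
    exact mul_left_cancel₀ h2ne h2x
  -- split the Jacobi sum
  have hsum2 : ∃ w ∈ Algebra.adjoin ℤ {ζ}, J = χ c * χ c + 2 * w := by
    set f : ZMod p → ℂ := fun x => χ x * χ (1 - x) with hfdef
    set t := (Finset.univ.erase c).filter (fun x : ZMod p => x.val < (1 - x).val) with htdef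
    set t' := (Finset.univ.erase c).filter (fun x : ZMod p => ¬ x.val < (1 - x).val) with ht'def
    have hvalne : ∀ x : ZMod p, x ≠ c → x.val ≠ (1 - x).val := by
      intro x hx h
      exact hx (hcfix x (ZMod.val_injective p h.symm))
    have ht't : ∑ x ∈ t', f x = ∑ x ∈ t, f x := by
      refine Finset.sum_bij' (fun x _ => 1 - x) (fun x _ => 1 - x) ?_ ?_ ?_ ?_ ?_
      · intro x hx
        rw [ht'def, Finset.mem_filter, Finset.mem_erase] at hx
        obtain ⟨⟨hxc, -⟩, hxlt⟩ := hx
        rw [htdef, Finset.mem_filter, Finset.mem_erase]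
        have h1x : 1 - x ≠ c := by
          intro h
          apply hxc
          have : x = 1 - c := by rw [← h]; ring
          rw [this, h1c]
        refine ⟨⟨h1x, Finset.mem_univ _⟩, ?_⟩
        have : (1 : ZMod p) - (1 - x) = x := by ring
        rw [this]
        have := hvalne x hxc
        omega
      · intro x hx
        rw [htdef, Finset.mem_filter, Finset.mem_erase] at hx
        obtain ⟨⟨hxc, -⟩, hxlt⟩ := hx
        rw [ht'def, Finset.mem_filter, Finset.mem_erase]
        have h1x : 1 - x ≠ c := by
          intro h
          apply hxc
          have : x = 1 - c := by rw [← h]; ring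
          rw [this, h1c]
        refine ⟨⟨h1x, Finset.mem_univ _⟩, ?_⟩
        have : (1 : ZMod p) - (1 - x) = x := by ring
        rw [this]
        omega
      · intro x _; ring
      · intro x _; ring
      · intro x _
        rw [hfdef]
        simp only
        have : (1 : ZMod p) - (1 - x) = x := by ring
        rw [this, mul_comm]
    have hsplit : J = f c + (∑ x ∈ t, f x + ∑ x ∈ t', f x) := by
      rw [hJdef]
      have h1 : jacobiSum χ χ = ∑ x : ZMod p, f x := rfl
      rw [h1, ← Finset.add_sum_erase _ f (Finset.mem_univ c)]
      congr 1
      rw [htdef, ht'def]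
      exact (Finset.sum_filter_add_sum_filter_not _ _ f).symm
    refine ⟨∑ x ∈ t, f x, ?_, ?_⟩
    · refine Subalgebra.sum_mem _ fun x _ => Subalgebra.mul_mem _ ?_ ?_ <;>
        exact MulChar.apply_mem_algebraAdjoin_of_pow_eq_one hχ3 hζ _
    · rw [hsplit, ht't, hfdef]
      simp only
      rw [h1c]
      ring
  obtain ⟨w, hwA, hw⟩ := hsum2
  obtain ⟨w₁, w₂, rfl⟩ := hA w hwA
  -- χ c * χ c = χ 2
  have hcc : χ c * χ c = χ 2 := by
    have h23 : χ 2 ^ 3 = 1 := hval3 2 h2ne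
    have hmulinv : χ 2 * χ c = 1 := by rw [← map_mul, hc2, map_one]
    have hcval : χ c = χ 2 ^ 2 := by
      calc χ c = χ 2 ^ 3 * χ c := by rw [h23, one_mul]
        _ = χ 2 ^ 2 * (χ 2 * χ c) := by ring
        _ = χ 2 ^ 2 := by rw [hmulinv, mul_one]
    rw [hcval]
    calc χ 2 ^ 2 * χ 2 ^ 2 = χ 2 ^ 3 * χ 2 := by ring
      _ = χ 2 := by rw [h23, one_mul]
  rw [hcc] at hw
  -- case analysis on χ 2
  have h23 : χ 2 ^ 3 = 1 := hval3 2 h2ne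
  have hcases : χ 2 = 1 ∨ χ 2 = ζ ∨ χ 2 = ζ ^ 2 := by
    have h0 : (χ 2 - 1) * ((χ 2 - ζ) * (χ 2 - ζ ^ 2)) = 0 := by
      linear_combination h23 + ((χ 2 - 1) * (ζ - 1 - χ 2)) * hζq
    rcases mul_eq_zero.mp h0 with h | h
    · left; exact sub_eq_zero.mp h
    · rcases mul_eq_zero.mp h with h' | h'
      · right; left; exact sub_eq_zero.mp h'
      · right; right; exact sub_eq_zero.mp h'
  -- the link : χ 2 = 1 ↔ 2^((p-1)/3) = 1
  set e : ℕ := (p - 1) / 3 with hedef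
  have hep : 3 * e = p - 1 := by omega
  have hepos : 0 < e := by omega
  have hlink : χ 2 = 1 ↔ (2 : ZMod p) ^ e = 1 := by
    obtain ⟨g, hg⟩ := IsCyclic.exists_generator (α := (ZMod p)ˣ)
    have hgord : orderOf g = p - 1 := by
      rw [orderOf_eq_card_of_forall_mem_zpowers hg, Nat.card_eq_fintype_card]
      exact ZMod.card_units p
    have h2u : IsUnit (2 : ZMod p) := isUnit_iff_ne_zero.mpr h2ne
    obtain ⟨k, hk⟩ : ∃ k : ℕ, g ^ k = h2u.unit := by
      have hfin : IsOfFinOrder g := isOfFinOrder_of_finite g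
      have := (hfin.mem_powers_iff_mem_zpowers).mpr (hg h2u.unit)
      obtain ⟨k, hk⟩ := this
      exact ⟨k, hk⟩
    have hvk : ((g : (ZMod p)ˣ) : ZMod p) ^ k = 2 := by
      rw [← Units.val_pow_eq_pow_val, hk, IsUnit.unit_spec]
    have hχ2k : χ 2 = χ ↑g ^ k := by rw [← hvk, map_pow]
    have hγ3 : χ ↑g ^ 3 = 1 := hval3 _ (Units.ne_zero g)
    have hγ1 : χ ↑g ≠ 1 := by
      intro hcon
      apply hχ1
      apply MulChar.ext
      intro u
      obtain ⟨m, hm⟩ : ∃ m : ℕ, g ^ m = u := by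
        have hfin : IsOfFinOrder g := isOfFinOrder_of_finite g
        have := (hfin.mem_powers_iff_mem_zpowers).mpr (hg u)
        obtain ⟨m, hm⟩ := this
        exact ⟨m, hm⟩
      rw [← hm]
      rw [MulChar.one_apply_coe]
      have : ((g ^ m : (ZMod p)ˣ) : ZMod p) = ((g : (ZMod p)ˣ) : ZMod p) ^ m :=
        Units.val_pow_eq_pow_val g m
      rw [this, map_pow, hcon, one_pow]
    have hγord : orderOf (χ ↑g) = 3 := by
      have hdvd : orderOf (χ ↑g) ∣ 3 := orderOf_dvd_of_pow_eq_one hγ3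
      rcases (Nat.prime_three).eq_one_or_self_of_dvd _ hdvd with h | h
      · exact absurd (orderOf_eq_one_iff.mp h) hγ1
      · exact h
    constructor
    · intro h1
      have h3k : 3 ∣ k := by
        rw [← hγord]
        apply orderOf_dvd_of_pow_eq_one
        rw [← hχ2k]; exact h1
      obtain ⟨m, rfl⟩ := h3k
      have hu : h2u.unit ^ e = 1 := by
        rw [← hk, ← pow_mul]
        have hme : 3 * m * e = (p - 1) * m := by
          rw [← hep]; ring
        rw [hme, pow_mul, ← hgord, pow_orderOf_eq_one, one_pow]
      calc (2 : ZMod p) ^ e = ((h2u.unit : (ZMod p)ˣ) : ZMod p) ^ e := by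
            rw [IsUnit.unit_spec]
        _ = ((h2u.unit ^ e : (ZMod p)ˣ) : ZMod p) := (Units.val_pow_eq_pow_val _ _).symm
        _ = 1 := by rw [hu, Units.val_one]
    · intro h1
      have hu : h2u.unit ^ e = 1 := by
        apply Units.ext
        rw [Units.val_pow_eq_pow_val, IsUnit.unit_spec, h1, Units.val_one]
      have hge : g ^ (k * e) = 1 := by rw [pow_mul, hk, hu]
      have hdvd : (p - 1) ∣ k * e := by
        rw [← hgord]; exact orderOf_dvd_of_pow_eq_one hge
      have h3k : 3 ∣ k := by
        obtain ⟨m, hm⟩ := hdvd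
        rw [← hep] at hm
        have : k * e = (3 * m) * e := by rw [hm]; ring
        have hk3m : k = 3 * m := Nat.eq_of_mul_eq_mul_right hepos this
        exact ⟨m, hk3m⟩
      obtain ⟨m, rfl⟩ := h3k
      rw [hχ2k, pow_mul, hγ3, one_pow]
  -- now conclude
  refine ⟨2 * a - b, z₂ - z₁, ?_, ?_⟩
  · linear_combination (-4) * hnormZ + (3 * (b + 3 * (z₂ - z₁))) * hbdef
  · rcases hcases with hc1 | hc1 | hc1
    · -- χ 2 = 1 : b even, 2^e = 1
      have heq : (a : ℂ) + (b : ℂ) * ζ = ((1 + 2 * w₁ : ℤ) : ℂ) + ((2 * w₂ : ℤ) : ℂ) * ζ := by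
        rw [← hJab, hw, hc1]; push_cast; ring
      obtain ⟨ha', hb'⟩ := hcoord _ _ _ _ heq
      have hLpar : (2 * a - b) % 2 = 0 := by omega
      simp only [hLpar, hlink.mp hc1]
    · -- χ 2 = ζ : b odd, 2^e ≠ 1
      have heq : (a : ℂ) + (b : ℂ) * ζ = ((2 * w₁ : ℤ) : ℂ) + ((1 + 2 * w₂ : ℤ) : ℂ) * ζ := by
        rw [← hJab, hw, hc1]; push_cast; ring
      obtain ⟨ha', hb'⟩ := hcoord _ _ _ _ heq
      have hLpar : (2 * a - b) % 2 = 1 := by omega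
      have hne : ¬ (2 : ZMod p) ^ e = 1 := by
        intro h
        have := hlink.mpr h
        rw [hc1] at this
        exact hζ1 this
      constructor
      · intro h; omega
      · intro h; exact absurd h hne
    · -- χ 2 = ζ² : b odd, 2^e ≠ 1
      have heq : (a : ℂ) + (b : ℂ) * ζ = ((2 * w₁ - 1 : ℤ) : ℂ) + ((2 * w₂ - 1 : ℤ) : ℂ) * ζ := by
        rw [← hJab, hw, hc1]; push_cast; linear_combination hζq
      obtain ⟨ha', hb'⟩ := hcoord _ _ _ _ heq
      have hLpar : (2 * a - b) % 2 = 1 := by omega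
      have hne : ¬ (2 : ZMod p) ^ e = 1 := by
        intro h
        have := hlink.mpr h
        rw [hc1] at this
        exact hζ21 this
      constructor
      · intro h; omega
      · intro h; exact absurd h hne

theorem rep_x2_27y2_prime (p : ℕ) (hp : p.Prime) (h6 : p % 6 = 1) :
    ¬((∃ x y : ℤ, (p : ℤ) = x ^ 2 + 27 * y ^ 2) ∧
        (∃ x y : ℤ, (p : ℤ) = 4 * x ^ 2 + 2 * x * y + 7 * y ^ 2)) ∧
    ((∃ x y : ℤ, (p : ℤ) = x ^ 2 + 27 * y ^ 2) ↔ (2 : ZMod p) ^ ((p - 1) / 3) = 1) ∧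
    ((∃ x y : ℤ, (p : ℤ) = x ^ 2 + 27 * y ^ 2) →
      Nat.card {z : ℤ × ℤ // z.1 ^ 2 + 27 * z.2 ^ 2 = (p : ℤ)} = 4 ∧
      Nat.card {z : ℤ × ℤ // 4 * z.1 ^ 2 + 2 * z.1 * z.2 + 7 * z.2 ^ 2 = (p : ℤ)} = 0) ∧
    (¬(∃ x y : ℤ, (p : ℤ) = x ^ 2 + 27 * y ^ 2) →
      Nat.card {z : ℤ × ℤ // z.1 ^ 2 + 27 * z.2 ^ 2 = (p : ℤ)} = 0 ∧
      Nat.card {z : ℤ × ℤ // 4 * z.1 ^ 2 + 2 * z.1 * z.2 + 7 * z.2 ^ 2 = (p : ℤ)} = 2) := by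
  obtain ⟨L, M, hLM, hiff⟩ := keyLM p hp h6
  have hp7 : 7 ≤ p := by
    have h2 := hp.two_le
    omega
  -- M ≠ 0 and L ≠ 0
  have hM0 : M ≠ 0 := by
    rintro rfl
    have h4 : 4 * (p : ℤ) = L ^ 2 := by linarith [hLM]
    have hLe : L % 2 = 0 := by
      have h1 := sq_mod_two L
      omega
    obtain ⟨l, rfl⟩ : ∃ l, L = 2 * l := ⟨L / 2, by omega⟩
    have hpl : (p : ℤ) = l ^ 2 := by linarith
    have : (l.natAbs) ^ 2 = p := by
      have := congrArg Int.natAbs hpl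
      simpa [Int.natAbs_pow] using this.symm
    have hd : l.natAbs ∣ p := ⟨l.natAbs, by rw [← this]; ring⟩
    rcases (Nat.Prime.eq_one_or_self_of_dvd hp _ hd) with h1 | h1
    · rw [h1] at this; omega
    · rw [h1] at this; nlinarith
  have hL0 : L ≠ 0 := by
    rintro rfl
    have h4 : 4 * (p : ℤ) = 27 * M ^ 2 := by linarith [hLM]
    have h3 : (3 : ℤ) ∣ 4 * (p : ℤ) := ⟨9 * M ^ 2, by linarith⟩
    have h3' : (3 : ℕ) ∣ 4 * p := by exact_mod_cast h3
    have : (3 : ℕ) ∣ p := by omega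
    have := (Nat.prime_dvd_prime_iff_eq (by norm_num) hp).mp this
    omega
  -- uniqueness specialized
  have uniq : ∀ L' M' : ℤ, 4 * (p : ℤ) = L' ^ 2 + 27 * M' ^ 2 →
      L' ^ 2 = L ^ 2 ∧ M' ^ 2 = M ^ 2 := fun L' M' h => uniqLM p hp L M L' M' hLM h
  -- parity of L and M agree
  have hpar : L % 2 = M % 2 := by
    have h1 := sq_mod_two L
    have h2 := sq_mod_two M
    have h3 : 4 * (p : ℤ) = L ^ 2 + 27 * M ^ 2 := hLM
    -- generalize squares
    generalize L ^ 2 = A at h1 h3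
    generalize M ^ 2 = B at h2 h3
    omega
  -- representability ↔ L even
  have hrepiff : (∃ x y : ℤ, (p : ℤ) = x ^ 2 + 27 * y ^ 2) ↔ L % 2 = 0 := by
    constructor
    · rintro ⟨x, y, hxy⟩
      have h4 : 4 * (p : ℤ) = (2 * x) ^ 2 + 27 * (2 * y) ^ 2 := by linear_combination 4 * hxy
      have := (uniq _ _ h4).1
      have h1 := sq_mod_two L
      have h2 : (2 * x) ^ 2 = 4 * x ^ 2 := by ring
      rw [h2] at this
      generalize hA : L ^ 2 = A at h1 this
      generalize x ^ 2 = B at this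
      omega
    · intro hLe
      have hMe : M % 2 = 0 := by omega
      obtain ⟨x₀, rfl⟩ : ∃ x₀, L = 2 * x₀ := ⟨L / 2, by omega⟩
      obtain ⟨y₀, rfl⟩ : ∃ y₀, M = 2 * y₀ := ⟨M / 2, by omega⟩
      exact ⟨x₀, y₀, by linarith [hLM]⟩
  refine ⟨?_, hrepiff.trans hiff, ?_, ?_⟩
  · -- exclusivity
    rintro ⟨⟨x, y, hxy⟩, ⟨x', y', hxy'⟩⟩
    have h4 : 4 * (p : ℤ) = (2 * x) ^ 2 + 27 * (2 * y) ^ 2 := by linear_combination 4 * hxy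
    have h4' : 4 * (p : ℤ) = (4 * x' + y') ^ 2 + 27 * y' ^ 2 := by linear_combination 4 * hxy'
    have e1 := (uniq _ _ h4).2
    have e2 := (uniq _ _ h4').2
    -- (2y)² = M², y'² = M² ⇒ parity contradiction : y'² = 4y²
    have : y' ^ 2 = (2 * y) ^ 2 := by rw [e2, ← e1]
    have hy' : y' % 2 = 1 := by
      -- p odd forces y' odd in 4x'²+2x'y'+7y'²
      have hodd : (p : ℤ) % 2 = 1 := by omega
      rcases Int.emod_two_eq y' with h | h
      · exfalso
        obtain ⟨c, rfl⟩ : ∃ c, y' = 2 * c := ⟨y' / 2, by omega⟩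
        have : (p : ℤ) = 2 * (2 * x' ^ 2 + 2 * x' * c + 14 * c ^ 2) := by linarith [hxy']
        omega
      · exact h
    have h1 := sq_mod_two y'
    have h2 : (2 * y) ^ 2 = 4 * y ^ 2 := by ring
    rw [h2] at this
    generalize y' ^ 2 = A at h1 this
    generalize y ^ 2 = B at this
    omega
  · -- representable case : counts 4 and 0
    intro hrep
    have hLe : L % 2 = 0 := hrepiff.mp hrep
    have hMe : M % 2 = 0 := by omega
    obtain ⟨x₀, rfl⟩ : ∃ x₀, L = 2 * x₀ := ⟨L / 2, by omega⟩
    obtain ⟨y₀, rfl⟩ : ∃ y₀, M = 2 * y₀ := ⟨M / 2, by omega⟩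
    have hx₀ : x₀ ≠ 0 := by rintro rfl; simp at hL0
    have hy₀ : y₀ ≠ 0 := by rintro rfl; simp at hM0
    have hparxy : x₀ % 2 ≠ y₀ % 2 := by
      -- p odd
      intro h
      have h1 := sq_mod_two x₀
      have h2 := sq_mod_two y₀
      have h3 : 4 * (p : ℤ) = (2*x₀) ^ 2 + 27 * (2*y₀) ^ 2 := hLM
      have h3' : (p : ℤ) = x₀ ^ 2 + 27 * y₀ ^ 2 := by linarith
      have hodd : (p : ℤ) % 2 = 1 := by omega
      generalize x₀ ^ 2 = A at h1 h3'
      generalize y₀ ^ 2 = B at h2 h3'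
      omega
    constructor
    · -- count for f is 4
      have hset : {z : ℤ × ℤ | z.1 ^ 2 + 27 * z.2 ^ 2 = (p : ℤ)} =
          (↑({(x₀, y₀), (x₀, -y₀), (-x₀, y₀), (-x₀, -y₀)} : Finset (ℤ × ℤ)) : Set (ℤ × ℤ)) := by
        ext ⟨x, y⟩
        simp only [Set.mem_setOf_eq, Finset.coe_insert, Set.mem_insert_iff,
          Finset.coe_singleton, Set.mem_singleton_iff, Prod.mk.injEq]
        constructor
        · intro h
          have h4 : 4 * (p : ℤ) = (2 * x) ^ 2 + 27 * (2 * y) ^ 2 := by linear_combination (-4) * h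
          obtain ⟨e1, e2⟩ := uniq _ _ h4
          have hx := sq_eq_sq_cases (quarter_sq e1)
          have hy := sq_eq_sq_cases (quarter_sq e2)
          rcases hx with rfl | rfl <;> rcases hy with rfl | rfl <;> tauto
        · have hLMs : (p : ℤ) = x₀ ^ 2 + 27 * y₀ ^ 2 := by
            have g1 : (2 * x₀) ^ 2 = 4 * x₀ ^ 2 := by ring
            have g2 : (2 * y₀) ^ 2 = 4 * y₀ ^ 2 := by ring
            linarith [hLM]
          rintro (⟨rfl, rfl⟩ | ⟨rfl, rfl⟩ | ⟨rfl, rfl⟩ | ⟨rfl, rfl⟩) <;>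
            linear_combination -hLMs
      rw [show {z : ℤ × ℤ // z.1 ^ 2 + 27 * z.2 ^ 2 = (p : ℤ)} =
        ↥{z : ℤ × ℤ | z.1 ^ 2 + 27 * z.2 ^ 2 = (p : ℤ)} from rfl,
        Nat.card_coe_set_eq, hset, Set.ncard_coe_finset]
      have d1 : ((x₀, y₀) : ℤ × ℤ) ∉ ({(x₀, -y₀), (-x₀, y₀), (-x₀, -y₀)} : Finset (ℤ × ℤ)) := by
        simp [Prod.ext_iff]; omega
      have d2 : ((x₀, -y₀) : ℤ × ℤ) ∉ ({(-x₀, y₀), (-x₀, -y₀)} : Finset (ℤ × ℤ)) := by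
        simp [Prod.ext_iff]; omega
      have d3 : ((-x₀, y₀) : ℤ × ℤ) ∉ ({(-x₀, -y₀)} : Finset (ℤ × ℤ)) := by
        simp [Prod.ext_iff]; omega
      rw [Finset.card_insert_of_notMem d1, Finset.card_insert_of_notMem d2,
        Finset.card_insert_of_notMem d3, Finset.card_singleton]
    · -- count for g is 0
      have hset : {z : ℤ × ℤ | 4 * z.1 ^ 2 + 2 * z.1 * z.2 + 7 * z.2 ^ 2 = (p : ℤ)} = ∅ := by
        ext ⟨x, y⟩
        simp only [Set.mem_setOf_eq, Set.mem_empty_iff_false, iff_false]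
        intro h
        have h4 : 4 * (p : ℤ) = (4 * x + y) ^ 2 + 27 * y ^ 2 := by linear_combination (-4) * h
        obtain ⟨e1, e2⟩ := uniq _ _ h4
        have hy := sq_eq_sq_cases e2
        have hxx := sq_eq_sq_cases e1
        rcases hy with h' | h' <;> rcases hxx with h'' | h'' <;> omega
      rw [show {z : ℤ × ℤ // 4 * z.1 ^ 2 + 2 * z.1 * z.2 + 7 * z.2 ^ 2 = (p : ℤ)} =
        ↥{z : ℤ × ℤ | 4 * z.1 ^ 2 + 2 * z.1 * z.2 + 7 * z.2 ^ 2 = (p : ℤ)} from rfl,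
        Nat.card_coe_set_eq, hset]
      simp
  · -- non-representable case : counts 0 and 2
    intro hnrep
    have hLo : L % 2 = 1 := by
      rcases Int.emod_two_eq L with h | h
      · exact absurd (hrepiff.mpr h) hnrep
      · exact h
    have hMo : M % 2 = 1 := by omega
    constructor
    · -- f count is 0
      have hset : {z : ℤ × ℤ | z.1 ^ 2 + 27 * z.2 ^ 2 = (p : ℤ)} = ∅ := by
        ext ⟨x, y⟩
        simp only [Set.mem_setOf_eq, Set.mem_empty_iff_false, iff_false]
        intro h
        exact hnrep ⟨x, y, h.symm⟩
      rw [show {z : ℤ × ℤ // z.1 ^ 2 + 27 * z.2 ^ 2 = (p : ℤ)} =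
        ↥{z : ℤ × ℤ | z.1 ^ 2 + 27 * z.2 ^ 2 = (p : ℤ)} from rfl,
        Nat.card_coe_set_eq, hset]
      simp
    · -- g count is 2
      -- adjust sign of M so that 4 ∣ L - M'
      have hM4 : 4 ∣ (L - M) ∨ 4 ∣ (L + M) := by omega
      obtain ⟨M', hM'sq, hM'div, hM'o⟩ : ∃ M', M' ^ 2 = M ^ 2 ∧ (4 : ℤ) ∣ (L - M') ∧ M' % 2 = 1 := by
        rcases hM4 with h | h
        · exact ⟨M, rfl, h, hMo⟩
        · exact ⟨-M, by ring, by omega, by omega⟩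
      obtain ⟨x₁, hx₁⟩ := hM'div
      -- so L = 4 x₁ + M'
      have hL : L = 4 * x₁ + M' := by linarith
      have hLM' : 4 * (p : ℤ) = (4 * x₁ + M') ^ 2 + 27 * M' ^ 2 := by
        rw [← hL, hM'sq]; exact hLM
      have hM'0 : M' ≠ 0 := by omega
      have hset : {z : ℤ × ℤ | 4 * z.1 ^ 2 + 2 * z.1 * z.2 + 7 * z.2 ^ 2 = (p : ℤ)} =
          (↑({(x₁, M'), (-x₁, -M')} : Finset (ℤ × ℤ)) : Set (ℤ × ℤ)) := by
        ext ⟨x, y⟩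
        simp only [Set.mem_setOf_eq, Finset.coe_insert, Set.mem_insert_iff,
          Finset.coe_singleton, Set.mem_singleton_iff, Prod.mk.injEq]
        constructor
        · intro h
          have h4 : 4 * (p : ℤ) = (4 * x + y) ^ 2 + 27 * y ^ 2 := by linear_combination (-4) * h
          obtain ⟨e1, e2⟩ := uniq _ _ h4
          rw [← hM'sq] at e2
          have hy := sq_eq_sq_cases e2
          have hxx := sq_eq_sq_cases e1
          rcases hy with rfl | rfl <;> rcases hxx with h'' | h''
          · left; constructor <;> omega
          · exfalso; omega
          · exfalso; omega
          · right; constructor <;> omega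
        · have key : 4 * (4 * x₁ ^ 2 + 2 * x₁ * M' + 7 * M' ^ 2) = 4 * (p : ℤ) := by
            linear_combination -hLM'
          rintro (⟨rfl, rfl⟩ | ⟨rfl, rfl⟩)
          · linarith
          · linarith [key]
      rw [show {z : ℤ × ℤ // 4 * z.1 ^ 2 + 2 * z.1 * z.2 + 7 * z.2 ^ 2 = (p : ℤ)} =
        ↥{z : ℤ × ℤ | 4 * z.1 ^ 2 + 2 * z.1 * z.2 + 7 * z.2 ^ 2 = (p : ℤ)} from rfl,
        Nat.card_coe_set_eq, hset, Set.ncard_coe_finset]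
      have d1 : ((x₁, M') : ℤ × ℤ) ∉ ({(-x₁, -M')} : Finset (ℤ × ℤ)) := by
        simp [Prod.ext_iff]; omega
      rw [Finset.card_insert_of_notMem d1, Finset.card_singleton]
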